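/- Let F and M be formal power series over ℚ satisfying (1 − z)F = (1 − z) + z F² and M = 1 + 3zM + z²M² (each equation forces constant coefficient 1 and has a unique power-series solution). Then F = 1 + zM. -/

import Mathlib

noncomputable section

open PowerSeries

/-- if `F` is the multi-edge tree series, `(1-z)F = (1-z) + zF²`, and `M`
is the 3-coloured Motzkin series, `M = 1 + 3zM + z²M²` (each equation has a unique
power-series solution, with constant coefficient 1), then `F = 1 + zM`. -/
theorem multiedge_trees_eq_three_motzkin (F M : PowerSeries ℚ)
    (hF : (1 - PowerSeries.X) * F = (1 - PowerSeries.X) + PowerSeries.X * F ^ 2)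
    (hM : M = 1 + 3 * PowerSeries.X * M + PowerSeries.X ^ 2 * M ^ 2) :
    F = 1 + PowerSeries.X * M := by
  -- constant coefficient of F is 1
  have hc : constantCoeff F = 1 := by
    have := congrArg (constantCoeff) hF
    simpa using this
  -- write F = 1 + X * N
  obtain ⟨N, hN⟩ : (X : PowerSeries ℚ) ∣ (F - 1) := by
    rw [PowerSeries.X_dvd_iff]
    simp [hc]
  have hFN : F = 1 + X * N := by rw [← hN]; ring
  have hXne : (X : PowerSeries ℚ) ≠ 0 := X_ne_zero
  -- N satisfies the Motzkin equation
  have key : (X : PowerSeries ℚ) * ((1 - X) * N) =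
      X * (1 + 2 * X * N + X ^ 2 * N ^ 2) := by
    rw [hFN] at hF
    linear_combination hF
  have hNeq : N = 1 + 3 * X * N + X ^ 2 * N ^ 2 := by
    have h2 := mul_left_cancel₀ hXne key
    linear_combination h2
  -- uniqueness: D := N - M is divisible by every power of X
  set D : PowerSeries ℚ := N - M with hD
  have hDrec : D = X * (3 + X * (N + M)) * D := by
    rw [hD]
    linear_combination hNeq - hM
  have hdvd : ∀ k : ℕ, (X : PowerSeries ℚ) ^ k ∣ D := by
    intro k
    induction k with
    | zero => simp
    | succ n ih =>
      obtain ⟨c, hc'⟩ := ih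
      rw [hDrec, hc']
      exact ⟨(3 + X * (N + M)) * c, by ring⟩
  have hD0 : D = 0 := by
    ext n
    have := hdvd (n + 1)
    rw [PowerSeries.X_pow_dvd_iff] at this
    simpa using this n (Nat.lt_succ_self n)
  have hNM : N = M := by rw [← sub_eq_zero]; exact hD0
  rw [hFN, hNM]
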